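/- Let K be an abelian group, let H be a subgroup of K whose index α = |K/H| is an uncountable cardinal, and let ℋ = {S : S is a subgroup of K with H ⊆ S, S ≠ K, and |S| = |K|}. Then |ℋ| = 2^α. -/

import Mathlib

open Cardinal

universe u

variable {G : Type u} [AddCommGroup G]

/-- Cardinality of an integer span. -/
private lemma myMkSpanLe (s : Set G) : #(Submodule.span ℤ s) ≤ max ℵ₀ #s := by
  classical
  have hsur : Function.Surjective
      ((Finsupp.linearCombination ℤ (Subtype.val : s → G)).rangeRestrict) :=
    LinearMap.surjective_rangeRestrict _
  have hre : LinearMap.range (Finsupp.linearCombination ℤ (Subtype.val : s → G))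
      = Submodule.span ℤ s := by
    rw [Finsupp.range_linearCombination, Subtype.range_coe]
  have h1 : #(Submodule.span ℤ s) ≤ #(s →₀ ℤ) := by
    rw [← hre]
    exact Cardinal.mk_le_of_surjective hsur
  refine h1.trans ?_
  rcases isEmpty_or_nonempty s with he | hne
  · exact le_max_of_le_left (Cardinal.mk_le_aleph0)
  · rw [Cardinal.mk_finsupp_lift_of_infinite' (↥s) ℤ]
    simp [Cardinal.lift_uzero, Cardinal.mk_int, max_comm]

private noncomputable def torC (G : Type u) [AddCommGroup G] (n : ℕ) : Cardinal.{u} :=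
  #(Submodule.torsionBy ℤ G (n : ℤ))

private noncomputable def muC (G : Type u) [AddCommGroup G] : Cardinal.{u} :=
  Cardinal.sum (fun p : ULift.{u} Nat.Primes => torC G p.down)

private lemma torC_mul_le (a b : ℕ) : torC G (a * b) ≤ torC G a * torC G b := by
  classical
  have hmap : ∀ x : Submodule.torsionBy ℤ G ((a * b : ℕ) : ℤ),
      (b : ℤ) • (x : G) ∈ Submodule.torsionBy ℤ G (a : ℤ) := by
    intro x
    have hx := x.2
    rw [Submodule.mem_torsionBy_iff] at hx
    rw [Submodule.mem_torsionBy_iff, smul_smul, ← Nat.cast_mul, hx]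
  set φ : Submodule.torsionBy ℤ G ((a * b : ℕ) : ℤ) → Submodule.torsionBy ℤ G (a : ℤ) :=
    fun x => ⟨(b : ℤ) • (x : G), hmap x⟩ with hφ
  apply Cardinal.mk_le_mk_mul_of_mk_preimage_le φ
  intro y
  rcases Set.eq_empty_or_nonempty (φ ⁻¹' {y}) with he | ⟨x₀, hx₀⟩
  · simp [he]
  · have hinj : Function.Injective
        (fun z : (φ ⁻¹' {y}) => (⟨(z.1.1 : G) - (x₀.1 : G), by
          rw [Submodule.mem_torsionBy_iff, smul_sub]
          have h1 : φ z.1 = y := z.2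
          have h2 : φ x₀ = y := hx₀
          have : (b : ℤ) • (z.1.1 : G) = (b : ℤ) • (x₀.1 : G) := by
            have := h1.trans h2.symm
            exact congrArg Subtype.val this
          rw [this, sub_self]⟩ : Submodule.torsionBy ℤ G (b : ℤ))) := by
      intro z w hzw
      have := congrArg Subtype.val hzw
      simp only [sub_left_inj] at this
      exact Subtype.ext (Subtype.ext this)
    exact Cardinal.mk_le_of_injective hinj

private lemma torC_le_mu (n : ℕ) (hn : 1 ≤ n) : torC G n ≤ max ℵ₀ (muC G) := by
  induction n using Nat.strong_induction_on with
  | _ n ih =>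
    rcases eq_or_lt_of_le hn with h1 | h2
    · -- n = 1
      have : Subsingleton (Submodule.torsionBy ℤ G ((n : ℕ) : ℤ)) := by
        constructor
        rintro ⟨x, hx⟩ ⟨y, hy⟩
        rw [Submodule.mem_torsionBy_iff] at hx hy
        rw [← h1] at hx hy
        simp only [Nat.cast_one, one_smul] at hx hy
        simp [hx, hy]
      exact le_max_of_le_left (Cardinal.mk_le_aleph0)
    · -- n ≥ 2
      have hn1 : n ≠ 1 := by omega
      have hp : (n.minFac).Prime := Nat.minFac_prime hn1
      set p := n.minFac
      set b := n / p with hb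
      have hnb : n = p * b := (Nat.mul_div_cancel' n.minFac_dvd).symm
      have hblt : b < n := Nat.div_lt_self (by omega) hp.one_lt
      have hb1 : 1 ≤ b := Nat.one_le_div_iff (hp.pos) |>.mpr (Nat.minFac_le (by omega))
      have h1 : torC G n ≤ torC G p * torC G b := by
        rw [hnb]; exact torC_mul_le p b
      have h2 : torC G p ≤ muC G :=
        Cardinal.le_sum (fun q : ULift.{u} Nat.Primes => torC G q.down) ⟨⟨p, hp⟩⟩
      have h3 : torC G b ≤ max ℵ₀ (muC G) := ih b hblt hb1
      calc torC G n ≤ torC G p * torC G b := h1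
        _ ≤ max ℵ₀ (muC G) * max ℵ₀ (muC G) :=
            mul_le_mul' (h2.trans (le_max_right _ _)) h3
        _ = max ℵ₀ (muC G) := Cardinal.mul_eq_self (le_max_left _ _)

private lemma essential_bound (E : Submodule ℤ G)
    (hE : ∀ g : G, g ≠ 0 → ∃ n : ℤ, n • g ∈ E ∧ n • g ≠ 0) :
    Cardinal.mk G ≤ max ℵ₀ (max #E (muC G)) := by
  classical
  set c : Cardinal.{u} := max ℵ₀ (max #E (muC G)) with hc
  have hcinf : ℵ₀ ≤ c := le_max_left _ _
  have key : #{g : G // g ≠ 0} ≤ #(ℤ × E) * max ℵ₀ (muC G) := by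
    choose n hn hn0 using fun g : {g : G // g ≠ 0} => hE g.1 g.2
    set φ : {g : G // g ≠ 0} → ℤ × E := fun g => (n g, ⟨n g • (g : G), hn g⟩) with hφ
    apply Cardinal.mk_le_mk_mul_of_mk_preimage_le φ
    rintro ⟨m, e⟩
    rcases Set.eq_empty_or_nonempty (φ ⁻¹' {(m, e)}) with he | ⟨g₀, hg₀⟩
    · simp [he]
    · have hg₀1 : n g₀ = m := congrArg Prod.fst hg₀
      have hg₀2 : n g₀ • (g₀ : G) = (e : G) := congrArg Subtype.val (congrArg Prod.snd hg₀)
      have hm0 : m ≠ 0 := by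
        intro h
        apply hn0 g₀
        rw [hg₀1, h, zero_smul]
      have hinj : Function.Injective (fun z : (φ ⁻¹' {(m, e)}) =>
          (⟨(z.1.1 : G) - (g₀.1 : G), by
            rw [Submodule.mem_torsionBy_iff]
            have hz1 : n z.1 = m := congrArg Prod.fst z.2
            have hz2 : n z.1 • (z.1 : G) = (e : G) := congrArg Subtype.val (congrArg Prod.snd z.2)
            have hz2' : m • (z.1.1 : G) = (e : G) := by rw [hz1] at hz2; exact hz2
            have hg₀2' : m • (g₀.1 : G) = (e : G) := by rw [hg₀1] at hg₀2; exact hg₀2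
            have hmv : m • ((z.1.1 : G) - (g₀.1 : G)) = 0 := by
              rw [smul_sub, hz2', hg₀2', sub_self]
            rcases Int.natAbs_eq m with h | h
            · rw [← h]; exact hmv
            · have h' : ((m.natAbs : ℕ) : ℤ) = -m := by omega
              rw [h', neg_smul, hmv, neg_zero]⟩ : Submodule.torsionBy ℤ G ((m.natAbs : ℕ) : ℤ))) := by
        intro z w hzw
        have := congrArg Subtype.val hzw
        simp only [sub_left_inj] at this
        exact Subtype.ext (Subtype.ext this)
      have h1 : #(φ ⁻¹' {(m, e)}) ≤ torC G m.natAbs := Cardinal.mk_le_of_injective hinj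
      refine h1.trans (torC_le_mu _ ?_)
      have : m.natAbs ≠ 0 := Int.natAbs_ne_zero.mpr hm0
      omega
  have hprod : #(ℤ × E) ≤ c := by
    rw [Cardinal.mk_prod, Cardinal.mk_int, Cardinal.lift_aleph0, Cardinal.lift_uzero]
    calc ℵ₀ * #E ≤ c * c := by
          exact mul_le_mul' hcinf ((le_max_left _ _).trans (le_max_right _ _))
      _ = c := Cardinal.mul_eq_self hcinf
  have h2 : #{g : G // g ≠ 0} ≤ c := by
    refine key.trans ?_
    calc #(ℤ × E) * max ℵ₀ (muC G) ≤ c * c := by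
          refine mul_le_mul' hprod (max_le hcinf ((le_max_right _ _).trans (le_max_right _ _)))
      _ = c := Cardinal.mul_eq_self hcinf
  have h3 : #G ≤ #{g : G // g ≠ 0} + 1 := by
    have := Cardinal.mk_sum_compl {g : G | g ≠ 0}
    rw [← this]
    have : #({g : G | g ≠ 0}ᶜ : Set G) ≤ 1 := by
      have : ({g : G | g ≠ 0}ᶜ : Set G) = {0} := by ext x; simp
      rw [this, Cardinal.mk_singleton]
    exact add_le_add le_rfl this
  refine h3.trans ?_
  calc #{g : G // g ≠ 0} + 1 ≤ c + c := add_le_add h2 (one_le_aleph0.trans hcinf)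
    _ = c := Cardinal.add_eq_self hcinf


private lemma prime_layer (p : ℕ) (hp : p.Prime) :
    ∃ (ι : Type u) (g : ι → G),
      (#(Submodule.torsionBy ℤ G (p : ℤ)) ≤ max ℵ₀ #ι) ∧
      (∀ i, g i ≠ 0) ∧ (∀ i, (p : ℤ) • g i = 0) ∧
      (∀ (i : ι) (n : ℤ), n • g i ∈ Submodule.span ℤ (g '' {j | j ≠ i}) → n • g i = 0) := by
  classical
  haveI : Fact p.Prime := ⟨hp⟩
  set V : Submodule ℤ G := Submodule.torsionBy ℤ G (p : ℤ) with hV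
  have hmemV : ∀ x : V, (p : ℤ) • (x : G) = 0 := by
    intro x
    have hx := x.2
    rwa [Submodule.mem_torsionBy_iff] at hx
  have htor : ∀ x : V, p • x = 0 := by
    intro x
    apply Subtype.ext
    rw [AddSubmonoidClass.coe_nsmul, ZeroMemClass.coe_zero, ← natCast_zsmul]
    exact hmemV x
  haveI : Module (ZMod p) V := AddCommGroup.zmodModule htor
  let b := Module.Basis.ofVectorSpace (ZMod p) V
  let ι : Set V := Module.Basis.ofVectorSpaceIndex (ZMod p) V
  have hli0 : LinearIndependent (ZMod p) ((↑) : ι → V) :=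
    Module.Basis.ofVectorSpaceIndex.linearIndependent (ZMod p) V
  refine ⟨ι, fun i => ((i : V) : G), ?_, ?_, ?_, ?_⟩
  · -- cardinality
    have he : #V = #(ι →₀ ZMod p) := Cardinal.mk_congr b.repr.toEquiv
    rw [he]
    rcases finite_or_infinite ι with hf | hinf
    · exact le_max_of_le_left (Cardinal.mk_le_aleph0)
    · have hginj : Function.Injective (Finsupp.graph : (ι →₀ ZMod p) → Finset (ι × ZMod p)) :=
        Finsupp.graph_injective _ _
      have h1 : #(ι →₀ ZMod p) ≤ #(Finset (ι × ZMod p)) :=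
        Cardinal.mk_le_of_injective hginj
      have h2 : #(Finset (ι × ZMod p)) = #(ι × ZMod p) := Cardinal.mk_finset_of_infinite _
      have h3 : #(ι × ZMod p) ≤ max ℵ₀ #ι := by
        rw [Cardinal.mk_prod, Cardinal.lift_uzero]
        have hzz : Cardinal.lift.{u} #(ZMod p) ≤ ℵ₀ := by
          rw [← Cardinal.lift_aleph0.{u, 0}]
          exact Cardinal.lift_le.mpr Cardinal.mk_le_aleph0
        calc #ι * Cardinal.lift.{u} #(ZMod p) ≤ max ℵ₀ #ι * max ℵ₀ #ι :=
              mul_le_mul' (le_max_right _ _) (hzz.trans (le_max_left _ _))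
          _ = max ℵ₀ #ι := Cardinal.mul_eq_self (le_max_left _ _)
      exact (h1.trans_eq h2).trans h3
  · intro i
    have h0 : (i : V) ≠ 0 := hli0.ne_zero i
    simpa using Subtype.coe_injective.ne h0
  · intro i
    exact hmemV (i : V)
  · intro i n hmem
    -- push into V
    have himg : (fun i : ι => ((i : V) : G)) '' {j | j ≠ i} =
        (V.subtype : V →ₗ[ℤ] G) '' ((Subtype.val : ι → V) '' {j | j ≠ i}) := by
      rw [Set.image_image]; rfl
    rw [himg, ← Submodule.map_span] at hmem
    have hxV : n • ((i : V) : G) = (V.subtype : V →ₗ[ℤ] G) (n • (i : V)) := by simp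
    rw [hxV] at hmem
    obtain ⟨y, hy, hyeq⟩ := hmem
    have hy' : y = n • (i : V) := Submodule.injective_subtype V hyeq
    rw [hy'] at hy
    -- move to ZMod p span
    have hle : ∀ z : V, z ∈ Submodule.span ℤ ((Subtype.val : ι → V) '' {j | j ≠ i}) →
        z ∈ Submodule.span (ZMod p) ((Subtype.val : ι → V) '' {j | j ≠ i}) := by
      intro z hz
      induction hz using Submodule.span_induction with
      | mem w hw => exact Submodule.mem_span.mpr fun S hS => hS hw
      | zero => exact Submodule.zero_mem _
      | add w₁ w₂ _ _ h1 h2 => exact Submodule.add_mem _ h1 h2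
      | smul a w _ h1 =>
        rw [← Int.cast_smul_eq_zsmul (ZMod p)]
        exact Submodule.smul_mem _ _ h1
    have hz : ((n : ZMod p)) • (i : V) ∈
        Submodule.span (ZMod p) ((Subtype.val : ι → V) '' {j | j ≠ i}) := by
      rw [Int.cast_smul_eq_zsmul]
      exact hle _ hy
    -- linear independence
    have hli := hli0
    rw [linearIndependent_iff_eq_zero_of_smul_mem_span] at hli
    have himg2 : (Subtype.val : ι → V) '' {j | j ≠ i} =
        (Subtype.val : ι → V) '' (Set.univ \ {i}) := by
      ext v
      simp only [Set.mem_image, Set.mem_setOf_eq, Set.mem_diff, Set.mem_univ,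
        Set.mem_singleton_iff, true_and]
    rw [himg2] at hz
    have hcast : (n : ZMod p) = 0 := hli i _ hz
    have hdvd : (p : ℤ) ∣ n := (ZMod.intCast_zmod_eq_zero_iff_dvd n p).mp hcast
    obtain ⟨k, rfl⟩ := hdvd
    rw [mul_comm, mul_smul, hmemV (i : V), smul_zero]

private lemma socle_indep (hG : ℵ₀ < #G) (hμ : #G ≤ muC G) :
    ∃ (ι : Type u) (f : ι → G), #G ≤ #ι ∧ (∀ i, f i ≠ 0) ∧
      iSupIndep (fun i => Submodule.span ℤ {f i}) := by
  classical
  choose ι g hcard hne htor hspan using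
    fun p : ULift.{u} Nat.Primes => prime_layer (G := G) (p.down : ℕ) p.down.2
  refine ⟨(p : ULift.{u} Nat.Primes) × ι p, fun k => g k.1 k.2, ?_, fun k => hne k.1 k.2, ?_⟩
  · -- cardinality
    rw [Cardinal.mk_sigma]
    have h1 : muC G ≤ Cardinal.sum (fun p : ULift.{u} Nat.Primes => ℵ₀ + #(ι p)) := by
      apply Cardinal.sum_le_sum
      intro p
      exact (hcard p).trans (max_le (self_le_add_right _ _) (self_le_add_left _ _))
    have h2 : Cardinal.sum (fun p : ULift.{u} Nat.Primes => ℵ₀ + #(ι p)) =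
        Cardinal.sum (fun _ : ULift.{u} Nat.Primes => (ℵ₀ : Cardinal.{u})) +
          Cardinal.sum (fun p : ULift.{u} Nat.Primes => #(ι p)) :=
      Cardinal.sum_add_distrib' _ _
    have h3 : Cardinal.sum (fun _ : ULift.{u} Nat.Primes => (ℵ₀ : Cardinal.{u})) ≤ ℵ₀ := by
      rw [Cardinal.sum_const']
      exact (mul_le_mul' Cardinal.mk_le_aleph0 le_rfl).trans Cardinal.aleph0_mul_aleph0.le
    set S := Cardinal.sum (fun p : ULift.{u} Nat.Primes => #(ι p)) with hS
    have h4 : #G ≤ ℵ₀ + S := hμ.trans (h1.trans (h2.le.trans (add_le_add h3 le_rfl)))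
    have h5 : #G ≤ max ℵ₀ S := by
      refine h4.trans ?_
      refine (add_le_add (le_max_left ℵ₀ S) (le_max_right ℵ₀ S)).trans ?_
      rw [Cardinal.add_eq_self (le_max_left _ _)]
    rcases le_max_iff.mp h5 with h | h
    · exact absurd h (not_le.mpr hG)
    · exact h
  · -- independence
    intro k
    obtain ⟨p, i⟩ := k
    set q : ℕ := (p.down : ℕ) with hqdef
    have hq : q.Prime := p.down.2
    let W : Submodule ℤ G :=
      { carrier := {x | ∃ N : ℕ, 0 < N ∧ ¬ q ∣ N ∧ (N : ℤ) • x = 0}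
        add_mem' := by
          rintro a b ⟨N1, h1, h2, h3⟩ ⟨N2, k1, k2, k3⟩
          refine ⟨N1 * N2, Nat.mul_pos h1 k1, ?_, ?_⟩
          · intro hd
            rcases (Nat.Prime.dvd_mul hq).mp hd with h | h
            exacts [h2 h, k2 h]
          · have e1 : ((N1 : ℤ) * N2) • a = 0 := by rw [mul_comm, mul_smul, h3, smul_zero]
            have e2 : ((N1 : ℤ) * N2) • b = 0 := by rw [mul_smul, k3, smul_zero]
            push_cast
            rw [smul_add, e1, e2, add_zero]
        zero_mem' := ⟨1, one_pos, fun hd => hq.one_lt.ne' (Nat.dvd_one.mp hd), smul_zero _⟩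
        smul_mem' := by
          rintro c x ⟨N, h1, h2, h3⟩
          exact ⟨N, h1, h2, by rw [smul_comm, h3, smul_zero]⟩ }
    have hWmem : ∀ x : G, x ∈ W ↔ ∃ N : ℕ, 0 < N ∧ ¬ q ∣ N ∧ (N : ℤ) • x = 0 := fun x => Iff.rfl
    set X : Submodule ℤ G := Submodule.span ℤ ((fun i' : ι p => g p i') '' {j | j ≠ i}) with hX
    have hsup : (⨆ (j : (p : ULift.{u} Nat.Primes) × ι p) (_ : j ≠ ⟨p, i⟩),
        Submodule.span ℤ {g j.1 j.2}) ≤ X ⊔ W := by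
      apply iSup₂_le
      rintro ⟨p', i'⟩ hne'
      rcases eq_or_ne p' p with rfl | hpp
      · have hii : i' ≠ i := fun h => hne' (by rw [h])
        refine le_sup_of_le_left ?_
        rw [Submodule.span_le, Set.singleton_subset_iff]
        exact Submodule.subset_span ⟨i', hii, rfl⟩
      · refine le_sup_of_le_right ?_
        rw [Submodule.span_le, Set.singleton_subset_iff]
        refine ⟨(p'.down : ℕ), p'.down.2.pos, ?_, htor p' i'⟩
        intro hd
        have heq : q = (p'.down : ℕ) := (Nat.prime_dvd_prime_iff_eq hq p'.down.2).mp hd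
        exact hpp (ULift.ext p' p (Subtype.ext heq.symm))
    have hdisj : Disjoint (Submodule.span ℤ {g p i}) (X ⊔ W) := by
      rw [Submodule.disjoint_def]
      intro x hx hx2
      obtain ⟨n, rfl⟩ := Submodule.mem_span_singleton.mp hx
      rcases Submodule.mem_sup.mp hx2 with ⟨u, hu, w, hw, hsum⟩
      have hVle : X ≤ Submodule.torsionBy ℤ G (q : ℤ) := by
        rw [hX, Submodule.span_le]
        rintro y ⟨i', -, rfl⟩
        rw [SetLike.mem_coe, Submodule.mem_torsionBy_iff]
        exact htor p i'
      have hxV : n • g p i ∈ Submodule.torsionBy ℤ G (q : ℤ) :=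
        Submodule.smul_mem _ n ((Submodule.mem_torsionBy_iff _ _).mpr (htor p i))
      have hwV : w ∈ Submodule.torsionBy ℤ G (q : ℤ) := by
        have : w = n • g p i - u := by rw [← hsum]; abel
        rw [this]
        exact Submodule.sub_mem _ hxV (hVle hu)
      obtain ⟨N, hN1, hN2, hN3⟩ := hw
      have hcop : Nat.Coprime q N := (Nat.Prime.coprime_iff_not_dvd hq).mpr hN2
      have hicop : IsCoprime (q : ℤ) (N : ℤ) := Nat.isCoprime_iff_coprime.mpr hcop
      obtain ⟨a, c, habc⟩ := hicop
      have hqw : (q : ℤ) • w = 0 := (Submodule.mem_torsionBy_iff _ _).mp hwV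
      have hw0 : w = 0 := by
        calc w = (1 : ℤ) • w := (one_smul _ _).symm
          _ = (a * q + c * N) • w := by rw [habc]
          _ = a • ((q : ℤ) • w) + c • ((N : ℤ) • w) := by
              rw [add_smul, mul_smul, mul_smul]
          _ = 0 := by rw [hqw, hN3, smul_zero, smul_zero, add_zero]
      have hxu : n • g p i ∈ X := by
        have : n • g p i = u := by rw [← hsum, hw0, add_zero]
        rw [this]; exact hu
      exact hspan p i n hxu
    exact hdisj.mono_right hsup

private lemma exists_indep (hG : ℵ₀ < #G) :
    ∃ (ι : Type u) (f : ι → G), #G ≤ #ι ∧ (∀ i, f i ≠ 0) ∧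
      iSupIndep (fun i => Submodule.span ℤ {f i}) := by
  classical
  obtain ⟨m, hmax⟩ := zorn_subset {s : Set G | ∀ x ∈ s, x ≠ 0 ∧
      Disjoint (Submodule.span ℤ {x}) (Submodule.span ℤ (s \ {x}))} (by
    intro c hcS hchain
    refine ⟨⋃₀ c, ?_, fun s hs => Set.subset_sUnion_of_mem hs⟩
    intro x hx
    obtain ⟨t, htc, hxt⟩ := hx
    refine ⟨(hcS htc x hxt).1, ?_⟩
    rw [Submodule.disjoint_def]
    intro y hy1 hy2
    obtain ⟨F, hF, hyF⟩ := Submodule.mem_span_finite_of_mem_span hy2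
    have hF' : ((insert x F : Finset G) : Set G) ⊆ ⋃ i ∈ c, i := by
      rw [Finset.coe_insert, ← Set.sUnion_eq_biUnion]
      exact Set.insert_subset ⟨t, htc, hxt⟩ (hF.trans Set.diff_subset)
    obtain ⟨t', ht'c, hsub⟩ := DirectedOn.exists_mem_subset_of_finset_subset_biUnion
      ⟨t, htc⟩ hchain.directedOn hF'
    rw [Finset.coe_insert] at hsub
    have hxt' : x ∈ t' := hsub (Set.mem_insert _ _)
    have hFt' : (F : Set G) ⊆ t' \ {x} := by
      intro z hz
      exact ⟨hsub (Set.mem_insert_of_mem _ hz), (hF hz).2⟩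
    have hdis := (hcS ht'c x hxt').2
    rw [Submodule.disjoint_def] at hdis
    exact hdis y hy1 (Submodule.span_mono hFt' hyF))
  have hmInd := hmax.1
  by_cases hbig : #G ≤ #m
  · refine ⟨m, Subtype.val, hbig, fun i => (hmInd i.1 i.2).1, ?_⟩
    intro i
    have hd := (hmInd i.1 i.2).2
    refine hd.mono_right ?_
    apply iSup₂_le
    intro j hj
    rw [Submodule.span_le, Set.singleton_subset_iff]
    exact Submodule.subset_span ⟨j.2, fun h => hj (Subtype.ext h)⟩
  · -- essential case
    set E := Submodule.span ℤ (m : Set G) with hE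
    have hess : ∀ g : G, g ≠ 0 → ∃ n : ℤ, n • g ∈ E ∧ n • g ≠ 0 := by
      intro g hg0
      by_contra hcon
      push_neg at hcon
      have hdisj : Disjoint (Submodule.span ℤ {g}) E := by
        rw [Submodule.disjoint_def]
        intro y hy1 hy2
        obtain ⟨n, rfl⟩ := Submodule.mem_span_singleton.mp hy1
        exact hcon n hy2
      have hins : ∀ x ∈ insert g m, x ≠ 0 ∧
          Disjoint (Submodule.span ℤ {x}) (Submodule.span ℤ (insert g m \ {x})) := by
        intro x hx
        rcases Set.mem_insert_iff.mp hx with rfl | hxm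
        · refine ⟨hg0, ?_⟩
          refine hdisj.mono_right (Submodule.span_mono ?_)
          rintro z ⟨hz1, hz2⟩
          rcases Set.mem_insert_iff.mp hz1 with rfl | hzm
          · exact absurd rfl hz2
          · exact hzm
        · refine ⟨(hmInd x hxm).1, ?_⟩
          rw [Submodule.disjoint_def]
          intro y hy1 hy2
          have hsub2 : insert g m \ {x} ⊆ insert g (m \ {x}) := by
            rintro z ⟨hz1, hz2⟩
            rcases Set.mem_insert_iff.mp hz1 with rfl | hzm
            · exact Set.mem_insert _ _
            · exact Set.mem_insert_of_mem _ ⟨hzm, hz2⟩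
          have hy2' := Submodule.span_mono hsub2 hy2
          rw [Submodule.mem_span_insert] at hy2'
          obtain ⟨a, z, hz, hyz⟩ := hy2'
          have h1 : y ∈ E := Submodule.span_mono (Set.singleton_subset_iff.mpr hxm) hy1
          have h2 : z ∈ E := Submodule.span_mono Set.diff_subset hz
          have hag : a • g ∈ E := by
            have : a • g = y - z := by rw [hyz]; abel
            rw [this]
            exact Submodule.sub_mem _ h1 h2
          have hag2 : a • g ∈ Submodule.span ℤ {g} :=
            Submodule.mem_span_singleton.mpr ⟨a, rfl⟩
          have hag0 : a • g = 0 := Submodule.disjoint_def.mp hdisj _ hag2 hag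
          have hyz' : y = z := by rw [hyz, hag0, zero_add]
          have hd := (hmInd x hxm).2
          exact Submodule.disjoint_def.mp hd y hy1 (hyz' ▸ hz)
      have hgm : g ∈ m := hmax.2 hins (Set.subset_insert g m) (Set.mem_insert g m)
      exact hg0 (Submodule.disjoint_def.mp hdisj g (Submodule.mem_span_singleton_self g)
        (Submodule.subset_span hgm))
    have hEcard : #E < #G := by
      have hsp := myMkSpanLe (m : Set G)
      rw [← hE] at hsp
      exact lt_of_le_of_lt hsp (max_lt hG (not_le.mp hbig))
    have hbound := essential_bound E hess
    have hmu : #G ≤ muC G := by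
      rcases le_max_iff.mp hbound with h | h
      · exact absurd h (not_le.mpr hG)
      · rcases le_max_iff.mp h with h2 | h2
        · exact absurd h2 (not_le.mpr hEcard)
        · exact h2
    exact socle_indep hG hmu

theorem stmt2 (K : Type*) [AddCommGroup K] (H : AddSubgroup K)
    (hα : Cardinal.aleph0 < Cardinal.mk (K ⧸ H)) :
    Cardinal.mk {S : AddSubgroup K // H ≤ S ∧ S ≠ ⊤ ∧ Cardinal.mk S = Cardinal.mk K} =
      2 ^ Cardinal.mk (K ⧸ H) := by
  classical
  set π : K →+ K ⧸ H := QuotientAddGroup.mk' H with hπ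
  have hπs : Function.Surjective π := QuotientAddGroup.mk'_surjective H
  have hker : π.ker = H := QuotientAddGroup.ker_mk' H
  -- upper bound
  have hupper : #{S : AddSubgroup K // H ≤ S ∧ S ≠ ⊤ ∧ #S = #K} ≤ 2 ^ #(K ⧸ H) := by
    have hinj : Function.Injective (fun S : {S : AddSubgroup K // H ≤ S ∧ S ≠ ⊤ ∧ #S = #K} =>
        (AddSubgroup.map π S.1 : AddSubgroup (K ⧸ H))) := by
      intro S T hST
      have hrec : ∀ U : {S : AddSubgroup K // H ≤ S ∧ S ≠ ⊤ ∧ #S = #K},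
          AddSubgroup.comap π (AddSubgroup.map π U.1) = U.1 := by
        intro U
        rw [AddSubgroup.comap_map_eq, hker]
        exact sup_eq_left.mpr U.2.1
      apply Subtype.ext
      rw [← hrec S, ← hrec T]
      simp only at hST
      rw [hST]
    calc #{S : AddSubgroup K // H ≤ S ∧ S ≠ ⊤ ∧ #S = #K}
        ≤ #(AddSubgroup (K ⧸ H)) := Cardinal.mk_le_of_injective hinj
      _ ≤ #(Set (K ⧸ H)) := Cardinal.mk_le_of_injective SetLike.coe_injective
      _ = 2 ^ #(K ⧸ H) := Cardinal.mk_set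
  -- lower bound
  obtain ⟨ι, f, hcard, hne, hind⟩ := exists_indep (G := K ⧸ H) hα
  have hi : ℵ₀ ≤ #ι := hα.le.trans hcard
  haveI : Infinite ι := by rw [Cardinal.infinite_iff]; exact hi
  obtain ⟨e⟩ : Nonempty (Option (ι ⊕ ι) ≃ ι) := by
    rw [← Cardinal.eq]
    simp only [Cardinal.mk_option, Cardinal.mk_sum, Cardinal.lift_id]
    rw [Cardinal.add_eq_self hi, Cardinal.add_one_eq hi]
  set gg : Option (ι ⊕ ι) → K ⧸ H := f ∘ e with hgg
  have hggind : iSupIndep (fun j => Submodule.span ℤ {gg j}) := hind.comp e.injective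
  have hggne : ∀ j, gg j ≠ 0 := fun j => hne (e j)
  have hkey : ∀ (A : Set (Option (ι ⊕ ι))) (k), k ∉ A →
      gg k ∉ Submodule.span ℤ (gg '' A) := by
    intro A k hk hmem
    have hle : Submodule.span ℤ (gg '' A) ≤
        ⨆ (j) (_ : j ≠ k), Submodule.span ℤ {gg j} := by
      rw [Submodule.span_le]
      rintro x ⟨j, hj, rfl⟩
      have hjk : j ≠ k := fun h => hk (h ▸ hj)
      exact le_iSup₂ (f := fun (j) (_ : j ≠ k) => Submodule.span ℤ {gg j}) j hjk
        (Submodule.mem_span_singleton_self _)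
    have h0 := Submodule.disjoint_def.mp (hggind k) (gg k)
      (Submodule.mem_span_singleton_self _) (hle hmem)
    exact hggne k h0
  have hgginj : Function.Injective gg := by
    intro a b hab
    by_contra hne'
    refine hkey {b} a (by simpa using hne') ?_
    rw [Set.image_singleton, hab]
    exact Submodule.mem_span_singleton_self _
  set J : Set ι → Set (Option (ι ⊕ ι)) :=
    fun I => some '' (Sum.inl '' Set.univ ∪ Sum.inr '' I) with hJdef
  have hJr : ∀ (I : Set ι) (i : ι), some (Sum.inr i) ∈ J I ↔ i ∈ I := by
    intro I i; simp [hJdef]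
  have hJl : ∀ (I : Set ι) (i : ι), some (Sum.inl i) ∈ J I := by
    intro I i; simp [hJdef]
  have hJnone : ∀ I : Set ι, none ∉ J I := by
    intro I; simp [hJdef]
  set T : Set ι → Submodule ℤ (K ⧸ H) := fun I => Submodule.span ℤ (gg '' J I) with hT
  set S' : Set ι → AddSubgroup K := fun I => AddSubgroup.comap π (T I).toAddSubgroup with hS'
  have hTinj : Function.Injective T := by
    intro I₁ I₂ h12
    ext i
    constructor
    · intro hi1
      by_contra hi2
      refine hkey (J I₂) (some (Sum.inr i)) (fun hmem => hi2 ((hJr I₂ i).mp hmem)) ?_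
      show gg (some (Sum.inr i)) ∈ T I₂
      rw [← h12]
      exact Submodule.subset_span ⟨some (Sum.inr i), (hJr I₁ i).mpr hi1, rfl⟩
    · intro hi2
      by_contra hi1
      refine hkey (J I₁) (some (Sum.inr i)) (fun hmem => hi1 ((hJr I₁ i).mp hmem)) ?_
      show gg (some (Sum.inr i)) ∈ T I₁
      rw [h12]
      exact Submodule.subset_span ⟨some (Sum.inr i), (hJr I₂ i).mpr hi2, rfl⟩
  have hmapS : ∀ I, AddSubgroup.map π (S' I) = (T I).toAddSubgroup := by
    intro I
    exact AddSubgroup.map_comap_eq_self_of_surjective hπs _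
  have hHle : ∀ I, H ≤ S' I := by
    intro I x hx
    have hx0 : π x = 0 := by
      rw [← AddMonoidHom.mem_ker, hker]; exact hx
    show π x ∈ (T I).toAddSubgroup
    rw [hx0]
    exact zero_mem _
  have hne_top : ∀ I, S' I ≠ ⊤ := by
    intro I htop
    have h1 : (T I).toAddSubgroup = ⊤ := by
      rw [← hmapS I, htop]
      exact AddSubgroup.map_top_of_surjective π hπs
    have h2 : gg none ∈ T I := by
      have : gg none ∈ (T I).toAddSubgroup := by rw [h1]; trivial
      exact this
    exact hkey (J I) none (hJnone I) h2
  have hTcard : ∀ I, #(T I) = #(K ⧸ H) := by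
    intro I
    apply le_antisymm
    · exact Cardinal.mk_le_of_injective Subtype.val_injective
    · refine hcard.trans ?_
      have hinj2 : Function.Injective (fun i : ι =>
          (⟨gg (some (Sum.inl i)), Submodule.subset_span ⟨_, hJl I i, rfl⟩⟩ : T I)) := by
        intro a b hab
        have := congrArg Subtype.val hab
        have h2 := hgginj this
        simpa using h2
      exact Cardinal.mk_le_of_injective hinj2
  have hK : #K = #(K ⧸ H) * #H := by
    have e1 : K ≃ (K ⧸ H) × H := AddSubgroup.addGroupEquivQuotientProdAddSubgroup
    rw [Cardinal.mk_congr e1, Cardinal.mk_prod, Cardinal.lift_id, Cardinal.lift_id]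
  have hScard : ∀ I, #(S' I) = #K := by
    intro I
    set φ : S' I →+ K ⧸ H := π.comp (S' I).subtype with hφ
    have hkerφ : φ.ker = H.addSubgroupOf (S' I) := by
      ext x
      rw [AddMonoidHom.mem_ker, AddSubgroup.mem_addSubgroupOf]
      show π x.1 = 0 ↔ _
      rw [← AddMonoidHom.mem_ker, hker]
    have hrange : φ.range = (T I).toAddSubgroup := by
      rw [← hmapS I]
      ext q
      constructor
      · rintro ⟨x, rfl⟩
        exact ⟨x.1, x.2, rfl⟩
      · rintro ⟨x, hx, rfl⟩
        exact ⟨⟨x, hx⟩, rfl⟩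
    have e2 : (S' I : Type _) ≃ ((S' I) ⧸ φ.ker) × φ.ker :=
      AddSubgroup.addGroupEquivQuotientProdAddSubgroup
    have e3 : ((S' I) ⧸ φ.ker) ≃+ φ.range := QuotientAddGroup.quotientKerEquivRange φ
    have e4 : (φ.ker : Type _) ≃+ H := by
      rw [hkerφ]
      exact AddSubgroup.addSubgroupOfEquivOfLe (hHle I)
    rw [Cardinal.mk_congr e2, Cardinal.mk_prod, Cardinal.lift_id, Cardinal.lift_id,
      Cardinal.mk_congr e3.toEquiv, Cardinal.mk_congr e4.toEquiv, hK]
    congr 1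
    rw [hrange]
    exact (hTcard I).symm ▸ rfl
  have hlower : 2 ^ #(K ⧸ H) ≤ #{S : AddSubgroup K // H ≤ S ∧ S ≠ ⊤ ∧ #S = #K} := by
    have hFinj : Function.Injective (fun I : Set ι =>
        (⟨S' I, hHle I, hne_top I, hScard I⟩ :
          {S : AddSubgroup K // H ≤ S ∧ S ≠ ⊤ ∧ #S = #K})) := by
      intro I₁ I₂ h12
      have h13 : S' I₁ = S' I₂ := congrArg Subtype.val h12
      have h14 : (T I₁).toAddSubgroup = (T I₂).toAddSubgroup := by
        rw [← hmapS I₁, ← hmapS I₂, h13]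
      exact hTinj (Submodule.toAddSubgroup_injective h14)
    calc 2 ^ #(K ⧸ H) ≤ 2 ^ #ι := Cardinal.power_le_power_left two_ne_zero hcard
      _ = #(Set ι) := Cardinal.mk_set.symm
      _ ≤ _ := Cardinal.mk_le_of_injective hFinj
  exact le_antisymm hupper hlower
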